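/- Let n = 2m+1 be odd, Λ = 1 - 2λ², and suppose ∂ satisfies ∂²(∂')² = (2/n²)(1 - ∂²)(Tₙ(∂) + Λ). Then ∇ = ∂² satisfies [(n²/8)(∇')² + Λ(∇ - 1)]² = ∇(∇ - 1)²·Vₘ(2∇ - 1)². -/

import Mathlib

open Complex Polynomial Polynomial.Chebyshev

/-- The Chebyshev polynomial of the third kind `Vₘ`, defined by the recurrence
`V₀ = 1`, `V₁ = 2X - 1`, `Vₘ₊₂ = 2X Vₘ₊₁ - Vₘ`. -/
noncomputable def chebV : ℕ → Polynomial ℂ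
  | 0 => 1
  | 1 => 2 * Polynomial.X - 1
  | (m + 2) => 2 * Polynomial.X * chebV (m + 1) - chebV m

lemma chebT_eq_chebV : ∀ (m : ℕ) (x : ℂ),
    (T ℂ (2 * m + 1)).eval x = x * (chebV m).eval (2 * x ^ 2 - 1)
  | 0, x => by norm_num [chebV]
  | 1, x => by
      have h1 : (2 * (1:ℕ) + 1 : ℤ) = 1 + 2 := by norm_num
      rw [h1, T_add_two]; norm_num [T_two, T_one]
      simp [chebV]
      ring
  | (m + 2), x => by
      have h := congrArg (Polynomial.eval x) (T_mul_T ℂ (2 * (m:ℤ) + 3) 2)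
      have i1 : (2 * ((m:ℕ) + 2 : ℕ) + 1 : ℤ) = 2 * (m:ℤ) + 3 + 2 := by push_cast; ring
      have i2 : (2 * (m:ℤ) + 3 - 2) = 2 * (m:ℕ) + 1 := by push_cast; ring
      have i3 : (2 * ((m:ℕ) + 1 : ℕ) + 1 : ℤ) = 2 * (m:ℤ) + 3 := by push_cast; ring
      rw [i2] at h
      rw [i1]
      have k1 := chebT_eq_chebV m x
      have k2 := chebT_eq_chebV (m + 1) x
      rw [i3] at k2
      simp only [Polynomial.eval_mul, Polynomial.eval_add, Polynomial.eval_ofNat, T_two,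
        Polynomial.eval_sub, Polynomial.eval_one, Polynomial.eval_pow, Polynomial.eval_X] at h ⊢
      have : chebV (m + 2) = 2 * Polynomial.X * chebV (m + 1) - chebV m := rfl
      rw [this]
      simp only [Polynomial.eval_mul, Polynomial.eval_sub, Polynomial.eval_ofNat, Polynomial.eval_X]
      linear_combination -h - k1 + (4 * x^2 - 2) * k2

/-- For `n = 2m + 1` and `Λ = 1 - 2λ²`, if `∂` satisfies
`∂²(∂')² = (2/n²)(1 - ∂²)(Tₙ(∂) + Λ)`, then `∇ = ∂²` satisfies
`[(n²/8)(∇')² + Λ(∇ - 1)]² = ∇(∇ - 1)² Vₘ(2∇ - 1)²`. -/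
theorem nabla_diff_eq_odd (m : ℕ) (lam : ℝ) (hlam : lam ∈ Set.Ioo (0 : ℝ) 1)
    (U : Set ℂ) (hU : IsOpen U)
    (p : ℂ → ℂ) (hp : DifferentiableOn ℂ p U)
    (hde : ∀ z ∈ U, p z ^ 2 * (deriv p z) ^ 2 =
      (2 / ((2 * m + 1 : ℕ) : ℂ) ^ 2) * (1 - p z ^ 2) *
        ((T ℂ (2 * m + 1)).eval (p z) + (1 - 2 * (lam : ℂ) ^ 2))) :
    ∀ z ∈ U,
      ((((2 * m + 1 : ℕ) : ℂ) ^ 2 / 8) * (deriv (fun w => p w ^ 2) z) ^ 2 +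
          (1 - 2 * (lam : ℂ) ^ 2) * (p z ^ 2 - 1)) ^ 2 =
        p z ^ 2 * (p z ^ 2 - 1) ^ 2 * ((chebV m).eval (2 * p z ^ 2 - 1)) ^ 2 := by
  intro z hz
  have hdz : HasDerivAt p (deriv p z) z :=
    ((hp.differentiableAt (hU.mem_nhds hz)).hasDerivAt)
  have h2 : deriv (fun w => p w ^ 2) z = 2 * p z * deriv p z := by
    have := (hdz.pow 2).deriv
    simp at this; exact this
  have hn : ((2 * m + 1 : ℕ) : ℂ) ≠ 0 := by
    exact Nat.cast_ne_zero.mpr (by omega)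
  set n : ℂ := ((2 * m + 1 : ℕ) : ℂ) with hndef
  set P : ℂ := p z
  set d : ℂ := deriv p z
  set Lam : ℂ := (1 - 2 * (lam : ℂ) ^ 2)
  set V : ℂ := (chebV m).eval (2 * P ^ 2 - 1)
  have E := hde z hz
  rw [chebT_eq_chebV m (p z)] at E
  have E' : n ^ 2 * (P ^ 2 * d ^ 2) = 2 * (1 - P ^ 2) * (P * V + Lam) := by
    rw [E]; field_simp; rfl
  rw [h2]
  linear_combination ((n ^ 2 * (P ^ 2 * d ^ 2) + 2 * (1 - P ^ 2) * (P * V + Lam)) / 4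
      + Lam * (P ^ 2 - 1)) * E'
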